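/- General solution of the second-order Hamilton–Ehrenfest system: for any real C₃, C₄, C₅ the functions Δ₂₂(t)=C₃ sin 2Ωt + C₄ cos 2Ωt + C₅, Δ₁₂(t)=(1/μ)(ΩC₃−ρC₄)cos 2Ωt − (1/μ)(ΩC₄+ρC₃)sin 2Ωt − (ρ/μ)C₅, Δ₁₁(t)=(1/μ²)((ρ²−Ω²)C₃+2ρΩC₄)sin 2Ωt + (1/μ²)((ρ²−Ω²)C₄−2ρΩC₃)cos 2Ωt + (σ̃/μ)C₅ satisfy the system Δ̇₁₁ = −2ρΔ₁₁ − 2σ̃Δ₁₂, Δ̇₁₂ = μΔ₁₁ − σ̃Δ₂₂, Δ̇₂₂ = 2μΔ₁₂ + 2ρΔ₂₂; conversely, every differentiable solution of this system is of this form for suitable C₃, C₄, C₅. -/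

import Mathlib

noncomputable section

/-- `Δ₂₂(t) = C₃ sin 2Ωt + C₄ cos 2Ωt + C₅`. -/
def D22sol (Ω C₃ C₄ C₅ : ℝ) (t : ℝ) : ℝ :=
  C₃ * Real.sin (2 * Ω * t) + C₄ * Real.cos (2 * Ω * t) + C₅

/-- `Δ₁₂(t) = (1/μ)(ΩC₃−ρC₄)cos 2Ωt − (1/μ)(ΩC₄+ρC₃)sin 2Ωt − (ρ/μ)C₅`. -/
def D12sol (μ ρ Ω C₃ C₄ C₅ : ℝ) (t : ℝ) : ℝ :=
  (1 / μ) * (Ω * C₃ - ρ * C₄) * Real.cos (2 * Ω * t)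
    - (1 / μ) * (Ω * C₄ + ρ * C₃) * Real.sin (2 * Ω * t) - (ρ / μ) * C₅

/-- `Δ₁₁(t) = (1/μ²)((ρ²−Ω²)C₃+2ρΩC₄)sin 2Ωt + (1/μ²)((ρ²−Ω²)C₄−2ρΩC₃)cos 2Ωt + (σ̃/μ)C₅`. -/
def D11sol (μ ρ σt Ω C₃ C₄ C₅ : ℝ) (t : ℝ) : ℝ :=
  (1 / μ ^ 2) * ((ρ ^ 2 - Ω ^ 2) * C₃ + 2 * ρ * Ω * C₄) * Real.sin (2 * Ω * t)
    + (1 / μ ^ 2) * ((ρ ^ 2 - Ω ^ 2) * C₄ - 2 * ρ * Ω * C₃) * Real.cos (2 * Ω * t)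
    + (σt / μ) * C₅

lemma hasDerivAt_trig (A B C Ω t : ℝ) :
    HasDerivAt (fun s => A * Real.sin (2 * Ω * s) + B * Real.cos (2 * Ω * s) + C)
      (A * (2 * Ω) * Real.cos (2 * Ω * t) - B * (2 * Ω) * Real.sin (2 * Ω * t)) t := by
  have h : HasDerivAt (fun s : ℝ => 2 * Ω * s) (2 * Ω) t := by
    simpa using (hasDerivAt_id t).const_mul (2 * Ω)
  have hs := (Real.hasDerivAt_sin (2 * Ω * t)).comp t h
  have hc := (Real.hasDerivAt_cos (2 * Ω * t)).comp t h
  have := ((hs.const_mul A).add (hc.const_mul B)).add_const C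
  refine HasDerivAt.congr_deriv this ?_
  ring

lemma const_of_zero_deriv {f : ℝ → ℝ} (h : ∀ t, HasDerivAt f 0 t) (t : ℝ) : f t = f 0 :=
  is_const_of_deriv_eq_zero (fun x => (h x).differentiableAt)
    (fun x => (h x).deriv) t 0

lemma D22_hasDerivAt (Ω C₃ C₄ C₅ t : ℝ) :
    HasDerivAt (D22sol Ω C₃ C₄ C₅)
      (C₃ * (2 * Ω) * Real.cos (2 * Ω * t) - C₄ * (2 * Ω) * Real.sin (2 * Ω * t)) t :=
  hasDerivAt_trig C₃ C₄ C₅ Ω t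

lemma D12_hasDerivAt (μ ρ Ω C₃ C₄ C₅ t : ℝ) :
    HasDerivAt (D12sol μ ρ Ω C₃ C₄ C₅)
      ((-((1 / μ) * (Ω * C₄ + ρ * C₃))) * (2 * Ω) * Real.cos (2 * Ω * t)
        - ((1 / μ) * (Ω * C₃ - ρ * C₄)) * (2 * Ω) * Real.sin (2 * Ω * t)) t := by
  have hfun : D12sol μ ρ Ω C₃ C₄ C₅ = fun s =>
      (-((1 / μ) * (Ω * C₄ + ρ * C₃))) * Real.sin (2 * Ω * s)
        + ((1 / μ) * (Ω * C₃ - ρ * C₄)) * Real.cos (2 * Ω * s) + (-((ρ / μ) * C₅)) := by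
    funext s; simp only [D12sol]; ring
  rw [hfun]
  exact hasDerivAt_trig _ _ _ Ω t

lemma D11_hasDerivAt (μ ρ σt Ω C₃ C₄ C₅ t : ℝ) :
    HasDerivAt (D11sol μ ρ σt Ω C₃ C₄ C₅)
      (((1 / μ ^ 2) * ((ρ ^ 2 - Ω ^ 2) * C₃ + 2 * ρ * Ω * C₄)) * (2 * Ω) * Real.cos (2 * Ω * t)
        - ((1 / μ ^ 2) * ((ρ ^ 2 - Ω ^ 2) * C₄ - 2 * ρ * Ω * C₃)) * (2 * Ω)
            * Real.sin (2 * Ω * t)) t := by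
  have hfun : D11sol μ ρ σt Ω C₃ C₄ C₅ = fun s =>
      ((1 / μ ^ 2) * ((ρ ^ 2 - Ω ^ 2) * C₃ + 2 * ρ * Ω * C₄)) * Real.sin (2 * Ω * s)
        + ((1 / μ ^ 2) * ((ρ ^ 2 - Ω ^ 2) * C₄ - 2 * ρ * Ω * C₃)) * Real.cos (2 * Ω * s)
        + (σt / μ) * C₅ := by
    funext s; simp only [D11sol]
  rw [hfun]
  exact hasDerivAt_trig _ _ _ Ω t

lemma fwd (μ ρ σt Ω : ℝ) (hμ : μ ≠ 0) (hσ : σt = (Ω ^ 2 + ρ ^ 2) / μ)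
    (C₃ C₄ C₅ t : ℝ) :
      HasDerivAt (D11sol μ ρ σt Ω C₃ C₄ C₅)
        (-2 * ρ * D11sol μ ρ σt Ω C₃ C₄ C₅ t
          - 2 * σt * D12sol μ ρ Ω C₃ C₄ C₅ t) t ∧
      HasDerivAt (D12sol μ ρ Ω C₃ C₄ C₅)
        (μ * D11sol μ ρ σt Ω C₃ C₄ C₅ t - σt * D22sol Ω C₃ C₄ C₅ t) t ∧
      HasDerivAt (D22sol Ω C₃ C₄ C₅)
        (2 * μ * D12sol μ ρ Ω C₃ C₄ C₅ t + 2 * ρ * D22sol Ω C₃ C₄ C₅ t) t := by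
  refine ⟨?_, ?_, ?_⟩
  · have h := D11_hasDerivAt μ ρ σt Ω C₃ C₄ C₅ t
    convert h using 1
    simp only [D11sol, D12sol]
    rw [hσ]
    field_simp
    ring
  · have h := D12_hasDerivAt μ ρ Ω C₃ C₄ C₅ t
    convert h using 1
    simp only [D11sol, D12sol, D22sol]
    rw [hσ]
    field_simp
    ring
  · have h := D22_hasDerivAt Ω C₃ C₄ C₅ t
    convert h using 1
    simp only [D12sol, D22sol]
    field_simp
    ring

set_option maxHeartbeats 1000000 in
/-- General solution of the second-order Hamilton–Ehrenfest system. -/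
theorem second_order_HES_general_solution
    (μ ρ σt Ω : ℝ) (hμ : μ ≠ 0) (hpos : 0 < σt * μ - ρ ^ 2)
    (hΩ : Ω = Real.sqrt (σt * μ - ρ ^ 2)) :
    (∀ C₃ C₄ C₅ : ℝ, ∀ t : ℝ,
      HasDerivAt (D11sol μ ρ σt Ω C₃ C₄ C₅)
        (-2 * ρ * D11sol μ ρ σt Ω C₃ C₄ C₅ t
          - 2 * σt * D12sol μ ρ Ω C₃ C₄ C₅ t) t ∧
      HasDerivAt (D12sol μ ρ Ω C₃ C₄ C₅)
        (μ * D11sol μ ρ σt Ω C₃ C₄ C₅ t - σt * D22sol Ω C₃ C₄ C₅ t) t ∧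
      HasDerivAt (D22sol Ω C₃ C₄ C₅)
        (2 * μ * D12sol μ ρ Ω C₃ C₄ C₅ t + 2 * ρ * D22sol Ω C₃ C₄ C₅ t) t)
    ∧
    (∀ d11 d12 d22 : ℝ → ℝ,
      (∀ t : ℝ, HasDerivAt d11 (-2 * ρ * d11 t - 2 * σt * d12 t) t) →
      (∀ t : ℝ, HasDerivAt d12 (μ * d11 t - σt * d22 t) t) →
      (∀ t : ℝ, HasDerivAt d22 (2 * μ * d12 t + 2 * ρ * d22 t) t) →
      ∃ C₃ C₄ C₅ : ℝ, ∀ t : ℝ,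
        d11 t = D11sol μ ρ σt Ω C₃ C₄ C₅ t ∧
        d12 t = D12sol μ ρ Ω C₃ C₄ C₅ t ∧
        d22 t = D22sol Ω C₃ C₄ C₅ t) := by
  have hΩ2 : Ω ^ 2 = σt * μ - ρ ^ 2 := by
    rw [hΩ]; exact Real.sq_sqrt hpos.le
  have hΩpos : 0 < Ω := hΩ ▸ Real.sqrt_pos.2 hpos
  have hΩne : Ω ≠ 0 := hΩpos.ne'
  have hσ : σt = (Ω ^ 2 + ρ ^ 2) / μ := by
    field_simp; linarith [hΩ2]
  constructor
  · exact fun C₃ C₄ C₅ t => fwd μ ρ σt Ω hμ hσ C₃ C₄ C₅ t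
  · intro d11 d12 d22 h11 h12 h22
    set C₅ : ℝ := μ * (μ * d11 0 + 2 * ρ * d12 0 + σt * d22 0) / (2 * Ω ^ 2) with hC5
    set C₄ : ℝ := d22 0 - C₅ with hC4
    set C₃ : ℝ := (μ * d12 0 + ρ * d22 0) / Ω with hC3
    refine ⟨C₃, C₄, C₅, ?_⟩
    -- differences
    set g11 : ℝ → ℝ := fun t => d11 t - D11sol μ ρ σt Ω C₃ C₄ C₅ t with hg11
    set g12 : ℝ → ℝ := fun t => d12 t - D12sol μ ρ Ω C₃ C₄ C₅ t with hg12
    set g22 : ℝ → ℝ := fun t => d22 t - D22sol Ω C₃ C₄ C₅ t with hg22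
    have e11 : ∀ t, HasDerivAt g11 (-2 * ρ * g11 t - 2 * σt * g12 t) t := by
      intro t
      have := (h11 t).sub (fwd μ ρ σt Ω hμ hσ C₃ C₄ C₅ t).1
      refine HasDerivAt.congr_deriv this ?_
      simp only [hg11, hg12]; ring
    have e12 : ∀ t, HasDerivAt g12 (μ * g11 t - σt * g22 t) t := by
      intro t
      have := (h12 t).sub (fwd μ ρ σt Ω hμ hσ C₃ C₄ C₅ t).2.1
      refine HasDerivAt.congr_deriv this ?_
      simp only [hg11, hg22]; ring
    have e22 : ∀ t, HasDerivAt g22 (2 * μ * g12 t + 2 * ρ * g22 t) t := by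
      intro t
      have := (h22 t).sub (fwd μ ρ σt Ω hμ hσ C₃ C₄ C₅ t).2.2
      refine HasDerivAt.congr_deriv this ?_
      simp only [hg12, hg22]; ring
    -- initial conditions vanish
    have z11 : g11 0 = 0 := by
      simp only [hg11, D11sol, Real.sin_zero, Real.cos_zero, mul_zero]
      rw [hC3, hC4, hC5, hσ]
      field_simp
      ring
    have z12 : g12 0 = 0 := by
      simp only [hg12, D12sol, Real.sin_zero, Real.cos_zero, mul_zero]
      rw [hC3, hC4, hC5, hσ]
      field_simp
      ring
    have z22 : g22 0 = 0 := by
      simp only [hg22, D22sol, Real.sin_zero, Real.cos_zero, mul_zero]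
      rw [hC4]
      ring
    -- invariants
    set I : ℝ → ℝ := fun t => μ * g11 t + 2 * ρ * g12 t + σt * g22 t with hI
    set p : ℝ → ℝ := fun t => μ ^ 2 * g11 t + 2 * ρ * μ * g12 t + (ρ ^ 2 - Ω ^ 2) * g22 t
      with hp
    set q : ℝ → ℝ := fun t => 2 * μ * Ω * g12 t + 2 * ρ * Ω * g22 t with hq
    have hI' : ∀ t, HasDerivAt I 0 t := by
      intro t
      have := (((e11 t).const_mul μ).add ((e12 t).const_mul (2 * ρ))).add
        ((e22 t).const_mul σt)
      refine HasDerivAt.congr_deriv this ?_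
      ring
    have hp' : ∀ t, HasDerivAt p (-(2 * Ω) * q t) t := by
      intro t
      have := (((e11 t).const_mul (μ ^ 2)).add ((e12 t).const_mul (2 * ρ * μ))).add
        ((e22 t).const_mul (ρ ^ 2 - Ω ^ 2))
      refine HasDerivAt.congr_deriv this ?_
      simp only [hq]
      rw [hσ]
      field_simp
      ring
    have hq' : ∀ t, HasDerivAt q ((2 * Ω) * p t) t := by
      intro t
      have := ((e12 t).const_mul (2 * μ * Ω)).add ((e22 t).const_mul (2 * ρ * Ω))
      refine HasDerivAt.congr_deriv this ?_
      simp only [hp]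
      rw [hσ]
      field_simp
      ring
    -- energy
    have hE : ∀ t, HasDerivAt (fun t => p t ^ 2 + q t ^ 2) 0 t := by
      intro t
      have h1 := ((hp' t).pow 2).add ((hq' t).pow 2)
      refine HasDerivAt.congr_deriv h1 ?_
      ring
    have hI0 : ∀ t, I t = 0 := fun t => by
      have := const_of_zero_deriv hI' t
      simp only [hI, z11, z12, z22] at this ⊢
      simpa using this
    have hpq0 : ∀ t, p t = 0 ∧ q t = 0 := by
      intro t
      have hconst := const_of_zero_deriv hE t
      have h0 : p 0 ^ 2 + q 0 ^ 2 = 0 := by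
        simp only [hp, hq, z11, z12, z22]; ring
      rw [h0] at hconst
      constructor <;> nlinarith [sq_nonneg (p t), sq_nonneg (q t)]
    -- conclude g = 0
    have hg0 : ∀ t, g11 t = 0 ∧ g12 t = 0 ∧ g22 t = 0 := by
      intro t
      have hIt := hI0 t
      obtain ⟨hpt, hqt⟩ := hpq0 t
      simp only [hI, hp, hq] at hIt hpt hqt
      have h22 : g22 t = 0 := by
        have : 2 * Ω ^ 2 * g22 t = 0 := by
          have hmul : μ * (μ * g11 t + 2 * ρ * g12 t + σt * g22 t) = 0 := by
            rw [hIt]; ring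
          linear_combination hmul - hpt + g22 t * hΩ2
        have : g22 t = 0 := by
          have h2 : (2 : ℝ) * Ω ^ 2 ≠ 0 := by positivity
          exact (mul_eq_zero.1 this).resolve_left h2
        exact this
      have h12 : g12 t = 0 := by
        rw [h22] at hqt
        have : 2 * μ * Ω * g12 t = 0 := by linarith
        have hne : 2 * μ * Ω ≠ 0 := by
          simp [hμ, hΩne]
        exact (mul_eq_zero.1 this).resolve_left hne
      have h11 : g11 t = 0 := by
        rw [h22, h12] at hpt
        have : μ ^ 2 * g11 t = 0 := by linarith
        have hne : μ ^ 2 ≠ 0 := pow_ne_zero 2 hμ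
        exact (mul_eq_zero.1 this).resolve_left hne
      exact ⟨h11, h12, h22⟩
    intro t
    obtain ⟨a, b, c⟩ := hg0 t
    simp only [hg11, hg12, hg22, sub_eq_zero] at a b c
    exact ⟨a, b, c⟩

end
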